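/- Let c(m) be the coefficient of x^m in the Maclaurin series of exp(βx/(1−x)) for a fixed real β > 0. Then there exists a constant D > 0 (depending only on β) such that c(m) ≤ D·e^{2√(βm)} for all m ≥ 1. -/

import Mathlib

open Complex Metric Real

open Complex Metric

private lemma iteratedDeriv_ofReal_comp (n : ℕ) :
    ∀ (g : ℝ → ℝ) (x : ℝ),
      iteratedDeriv n (fun t : ℝ => (g t : ℂ)) x = Complex.ofReal (iteratedDeriv n g x) := by
  induction n with
  | zero => intro g x; simp
  | succ n ih =>
    intro g x
    rw [iteratedDeriv_succ', iteratedDeriv_succ']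
    have hd : deriv (fun t : ℝ => (g t : ℂ)) = fun t : ℝ => ((deriv g t : ℝ) : ℂ) := by
      funext y
      by_cases h : DifferentiableAt ℝ g y
      · exact h.hasDerivAt.ofReal_comp.deriv
      · have h2 : ¬ DifferentiableAt ℝ (fun t : ℝ => (g t : ℂ)) y := by
          intro hc
          apply h
          have := (Complex.reCLM.differentiableAt).comp y hc
          simpa [Function.comp_def] using this
        rw [deriv_zero_of_not_differentiableAt h, deriv_zero_of_not_differentiableAt h2,
          Complex.ofReal_zero]
    rw [hd]
    exact ih (deriv g) x

private lemma iteratedDeriv_comp_ofReal' {s : Set ℂ} (hs : IsOpen s) (n : ℕ) :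
    ∀ (F : ℂ → ℂ), AnalyticOnNhd ℂ F s → ∀ x : ℝ, (x : ℂ) ∈ s →
      iteratedDeriv n (fun t : ℝ => F t) x = iteratedDeriv n F x := by
  induction n with
  | zero => intro F _ x _; simp
  | succ n ih =>
    intro F hF x hx
    rw [iteratedDeriv_succ', iteratedDeriv_succ']
    have hmem : (fun t : ℝ => (t : ℂ)) ⁻¹' s ∈ nhds x :=
      (hs.preimage Complex.continuous_ofReal).mem_nhds hx
    have hev : deriv (fun t : ℝ => F t) =ᶠ[nhds x] fun t : ℝ => deriv F t :=
      Filter.eventually_of_mem hmem fun y hy =>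
        ((hF _ hy).differentiableAt.hasDerivAt.comp_ofReal).deriv
    exact (hev.iteratedDeriv_eq n).trans (ih _ hF.deriv x hx)


private lemma cauchy_coeff_bound {F : ℂ → ℂ} {M R : ℝ} (hM : 0 ≤ M) (hR0 : 0 < R)
    (hd : ∀ z ∈ closedBall (0 : ℂ) R, DifferentiableAt ℂ F z)
    (hb : ∀ θ : ℝ, ‖F (circleMap 0 R θ)‖ ≤ M) (m : ℕ) :
    ‖iteratedDeriv m F 0‖ ≤ (m.factorial : ℝ) * (M / R ^ m) := by
  set Rnn : NNReal := R.toNNReal with hRnn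
  have hcoe : (Rnn : ℝ) = R := Real.coe_toNNReal _ hR0.le
  have hdo : DifferentiableOn ℂ F (closedBall (0 : ℂ) Rnn) := by
    rw [hcoe]; exact fun z hz => (hd z hz).differentiableWithinAt
  have hps : HasFPowerSeriesOnBall F (cauchyPowerSeries F 0 Rnn) 0 Rnn :=
    hdo.hasFPowerSeriesOnBall (by simpa [hRnn] using Real.toNNReal_pos.2 hR0)
  have key := hps.factorial_smul (1 : ℂ) m
  have h1 : iteratedDeriv m F 0 = (m.factorial : ℂ) * (cauchyPowerSeries F 0 Rnn m fun _ => 1) := by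
    rw [iteratedDeriv_eq_iteratedFDeriv, ← key, nsmul_eq_mul]
  have hcont : Continuous fun θ : ℝ => ‖F (circleMap 0 R θ)‖ := by
    refine Continuous.norm ?_
    refine continuous_iff_continuousAt.2 fun θ => ?_
    refine (hd _ ?_).continuousAt.comp (continuous_circleMap 0 R).continuousAt
    simp [norm_circleMap_zero, abs_of_pos hR0]
  have hintle : (∫ θ in (0 : ℝ)..(2 * π), ‖F (circleMap 0 R θ)‖) ≤ 2 * π * M := by
    have h2 : (∫ θ in (0 : ℝ)..(2 * π), ‖F (circleMap 0 R θ)‖) ≤ ∫ _ in (0 : ℝ)..(2 * π), M :=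
      intervalIntegral.integral_mono_on Real.two_pi_pos.le
        (hcont.intervalIntegrable 0 (2 * π)) intervalIntegrable_const fun x _ => hb x
    simpa using h2
  have hop : ‖(cauchyPowerSeries F 0 Rnn m) fun _ => 1‖ ≤ ‖cauchyPowerSeries F 0 Rnn m‖ := by
    have := (cauchyPowerSeries F 0 Rnn m).le_opNorm fun _ => (1 : ℂ)
    simpa using this
  have hnorm : ‖cauchyPowerSeries F 0 (Rnn : ℝ) m‖ ≤
      ((2 * π)⁻¹ * ∫ θ in (0 : ℝ)..(2 * π), ‖F (circleMap 0 R θ)‖) * |R|⁻¹ ^ m := by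
    rw [hcoe]; exact norm_cauchyPowerSeries_le F 0 R m
  have hstep : ((2 * π)⁻¹ * ∫ θ in (0 : ℝ)..(2 * π), ‖F (circleMap 0 R θ)‖) * |R|⁻¹ ^ m
      ≤ M / R ^ m := by
    have h3 : (2 * π)⁻¹ * (∫ θ in (0 : ℝ)..(2 * π), ‖F (circleMap 0 R θ)‖) ≤ M := by
      rw [inv_mul_le_iff₀ Real.two_pi_pos]
      linarith [hintle]
    have h4 : |R|⁻¹ ^ m = (R ^ m)⁻¹ := by
      rw [abs_of_pos hR0, inv_pow]
    rw [h4, div_eq_mul_inv]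
    exact mul_le_mul_of_nonneg_right h3 (by positivity)
  calc ‖iteratedDeriv m F 0‖
      = (m.factorial : ℝ) * ‖(cauchyPowerSeries F 0 Rnn m) fun _ => 1‖ := by
        rw [h1, norm_mul]; norm_num
    _ ≤ (m.factorial : ℝ) * (M / R ^ m) := by
        refine mul_le_mul_of_nonneg_left ?_ (by positivity)
        exact hop.trans (hnorm.trans hstep)


private lemma elementary_bound {beta : ℝ} (hbeta : 0 < beta) {m : ℕ} (hm : 1 ≤ m)
    {t : ℝ} (ht : t = Real.sqrt (beta / (beta + m))) :
    Real.exp (beta * (1 - t) / t) / (1 - t) ^ m ≤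
      Real.exp (beta + beta / (1 - Real.sqrt (beta / (beta + 1)))) *
        Real.exp (2 * Real.sqrt (beta * m)) := by
  have hm1 : (1 : ℝ) ≤ (m : ℝ) := by exact_mod_cast hm
  have hbm : 0 < beta + m := by linarith
  have hfrac0 : 0 < beta / (beta + m) := div_pos hbeta hbm
  have ht0 : 0 < t := ht ▸ Real.sqrt_pos.2 hfrac0
  have ht2 : t ^ 2 = beta / (beta + m) := by rw [ht]; exact Real.sq_sqrt hfrac0.le
  have hfrac1 : beta / (beta + m) < 1 := (div_lt_one hbm).2 (by linarith)
  have ht1 : t < 1 := by nlinarith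
  have hR0 : 0 < 1 - t := by linarith
  set del := 1 - Real.sqrt (beta / (beta + 1)) with hdel
  have hb1 : 0 < beta + 1 := by linarith
  have hs1lt : Real.sqrt (beta / (beta + 1)) < 1 := by
    have h1 : beta / (beta + 1) < 1 := (div_lt_one hb1).2 (by linarith)
    have h0 : (0 : ℝ) ≤ beta / (beta + 1) := (div_pos hbeta hb1).le
    calc Real.sqrt (beta / (beta + 1)) < Real.sqrt 1 := Real.sqrt_lt_sqrt h0 h1
      _ = 1 := Real.sqrt_one
  have hdel0 : 0 < del := by rw [hdel]; linarith
  have htdel : del ≤ 1 - t := by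
    have h2 : t ≤ Real.sqrt (beta / (beta + 1)) := by
      rw [ht]
      apply Real.sqrt_le_sqrt
      rw [div_le_div_iff₀ hbm hb1]
      nlinarith
    rw [hdel]; linarith
  have hsq := Real.sq_sqrt (show (0 : ℝ) ≤ beta * m by positivity)
  have hsn : 0 ≤ Real.sqrt (beta * m) := Real.sqrt_nonneg _
  have ha : beta * (1 - t) / t ≤ beta + Real.sqrt (beta * m) := by
    have h6 : (beta / t) ^ 2 = beta * (beta + m) := by
      rw [div_pow, ht2]; field_simp
    have h5 : beta / t ≤ beta + Real.sqrt (beta * m) := by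
      nlinarith [div_nonneg hbeta.le ht0.le]
    have h7 : beta * (1 - t) / t ≤ beta / t := by
      apply (div_le_div_iff_of_pos_right ht0).2
      nlinarith
    linarith
  have hmt : (m : ℝ) * t ≤ Real.sqrt (beta * m) := by
    have h8 : ((m : ℝ) * t) ^ 2 ≤ beta * m := by
      rw [mul_pow, ht2, ← mul_div_assoc, div_le_iff₀ hbm]
      nlinarith
    nlinarith [mul_nonneg (Nat.cast_nonneg m : (0 : ℝ) ≤ m) ht0.le]
  have hmt2 : (m : ℝ) * t ^ 2 / (1 - t) ≤ beta / del := by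
    have h9 : (m : ℝ) * t ^ 2 ≤ beta := by
      rw [ht2, ← mul_div_assoc, div_le_iff₀ hbm]
      nlinarith
    exact div_le_div₀ hbeta.le h9 hdel0 htdel
  have hexp : 1 / (1 - t) ≤ Real.exp (t / (1 - t)) := by
    have h10 := Real.add_one_le_exp (t / (1 - t))
    have h11 : t / (1 - t) + 1 = 1 / (1 - t) := by field_simp; ring
    linarith
  have hpow : (1 / (1 - t)) ^ m ≤ Real.exp ((m : ℝ) * (t / (1 - t))) := by
    calc (1 / (1 - t)) ^ m ≤ (Real.exp (t / (1 - t))) ^ m :=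
          pow_le_pow_left₀ (by positivity) hexp m
      _ = Real.exp ((m : ℝ) * (t / (1 - t))) := (Real.exp_nat_mul _ m).symm
  have hsplit : (m : ℝ) * (t / (1 - t)) = (m : ℝ) * t + (m : ℝ) * t ^ 2 / (1 - t) := by
    field_simp; ring
  calc Real.exp (beta * (1 - t) / t) / (1 - t) ^ m
      = Real.exp (beta * (1 - t) / t) * (1 / (1 - t)) ^ m := by
        rw [one_div, inv_pow, div_eq_mul_inv]
    _ ≤ Real.exp (beta + Real.sqrt (beta * m)) * Real.exp ((m : ℝ) * (t / (1 - t))) :=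
        mul_le_mul (Real.exp_le_exp.2 ha) hpow (by positivity) (Real.exp_pos _).le
    _ ≤ Real.exp (beta + Real.sqrt (beta * m)) *
          Real.exp (Real.sqrt (beta * m) + beta / del) := by
        refine mul_le_mul_of_nonneg_left ?_ (Real.exp_pos _).le
        refine Real.exp_le_exp.2 ?_
        rw [hsplit]; linarith
    _ = Real.exp (beta + beta / del) * Real.exp (2 * Real.sqrt (beta * m)) := by
        rw [← Real.exp_add, ← Real.exp_add]; ring_nf


private lemma modulus_bound {beta R : ℝ} (hbeta : 0 < beta) (hR0 : 0 < R) (hR1 : R < 1)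
    {z : ℂ} (hz : ‖z‖ ≤ R) :
    ‖Complex.exp (beta * z / (1 - z))‖ ≤ Real.exp (beta * R / (1 - R)) := by
  have hxy : z.re ^ 2 + z.im ^ 2 ≤ R ^ 2 := by
    have h1 := Complex.sq_norm z
    rw [Complex.normSq_apply] at h1
    nlinarith [norm_nonneg z]
  have hxR : z.re ≤ R := by nlinarith [sq_nonneg z.im]
  have hz1 : (1 : ℂ) - z ≠ 0 := by
    intro h
    have : z = 1 := by linear_combination -h
    rw [this] at hxy
    simp at hxy
    rw [abs_of_pos hR0] at hxy
    linarith
  have hnsq : 0 < Complex.normSq (1 - z) := Complex.normSq_pos.2 hz1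
  have hnsq' : Complex.normSq (1 - z) = (1 - z.re) ^ 2 + z.im ^ 2 := by
    rw [Complex.normSq_apply]
    simp
    ring
  rw [Complex.norm_exp, Real.exp_le_exp]
  have hre : ((beta : ℂ) * z / (1 - z)).re =
      (beta * z.re * (1 - z.re) + beta * z.im * (-z.im)) / Complex.normSq (1 - z) := by
    rw [Complex.div_re]
    simp [Complex.mul_re, Complex.mul_im]
    ring
  rw [hre, hnsq', div_le_div_iff₀ (by rw [hnsq'] at hnsq; exact hnsq) (by linarith)]
  nlinarith [mul_nonneg (mul_nonneg hbeta.le (sub_nonneg.2 hxR)) (sub_nonneg.2 (hxR.trans hR1.le)),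
    mul_nonneg hbeta.le (sq_nonneg z.im)]

/-- The Maclaurin coefficients c(m) of exp(βx/(1−x)) satisfy c(m) ≤ D·e^{2√(βm)} for some
constant D > 0 depending only on β > 0. -/
theorem maclaurin_coeff_bound (beta : ℝ) (hbeta : 0 < beta) :
    ∃ D : ℝ, 0 < D ∧ ∀ m : ℕ, 1 ≤ m →
      iteratedDeriv m (fun x : ℝ => Real.exp (beta * x / (1 - x))) 0 / (Nat.factorial m : ℝ) ≤
        D * Real.exp (2 * Real.sqrt (beta * m)) := by
  refine ⟨Real.exp (beta + beta / (1 - Real.sqrt (beta / (beta + 1)))), Real.exp_pos _, ?_⟩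
  intro m hm
  set g : ℝ → ℝ := fun x => Real.exp (beta * x / (1 - x)) with hg
  have hm1 : (1 : ℝ) ≤ (m : ℝ) := by exact_mod_cast hm
  have hbm : 0 < beta + m := by linarith
  set t : ℝ := Real.sqrt (beta / (beta + m)) with ht
  have hfrac0 : 0 < beta / (beta + m) := div_pos hbeta hbm
  have ht0 : 0 < t := Real.sqrt_pos.2 hfrac0
  have ht2 : t ^ 2 = beta / (beta + m) := Real.sq_sqrt hfrac0.le
  have hfrac1 : beta / (beta + m) < 1 := (div_lt_one hbm).2 (by linarith)
  have ht1 : t < 1 := by nlinarith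
  set R : ℝ := 1 - t with hR
  have hR0 : 0 < R := by rw [hR]; linarith
  have hR1 : R < 1 := by rw [hR]; linarith
  set F : ℂ → ℂ := fun z => Complex.exp (beta * z / (1 - z)) with hF
  have hd : ∀ z ∈ Metric.closedBall (0 : ℂ) R, DifferentiableAt ℂ F z := by
    intro z hz
    have habs : ‖z‖ ≤ R := by
      simpa [Complex.dist_eq] using Metric.mem_closedBall.1 hz
    have hz1 : (1 : ℂ) - z ≠ 0 := by
      intro h
      have hz2 : z = 1 := by linear_combination -h
      rw [hz2] at habs
      simp at habs
      linarith
    exact (((differentiableAt_const _).mul differentiableAt_id).div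
      ((differentiableAt_const _).sub differentiableAt_id) hz1).cexp
  have hb : ∀ θ : ℝ, ‖F (circleMap 0 R θ)‖ ≤ Real.exp (beta * R / (1 - R)) := by
    intro θ
    exact modulus_bound hbeta hR0 hR1 (by rw [norm_circleMap_zero, abs_of_pos hR0])
  have hcb := cauchy_coeff_bound (Real.exp_pos (beta * R / (1 - R))).le hR0 hd hb m
  have hAn : AnalyticOnNhd ℂ F {(1 : ℂ)}ᶜ := by
    refine DifferentiableOn.analyticOnNhd (fun z hz => ?_) isOpen_compl_singleton
    have hz1 : (1 : ℂ) - z ≠ 0 := by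
      intro h
      exact hz (Set.mem_singleton_iff.2 (sub_eq_zero.1 h).symm)
    exact ((((differentiableAt_const _).mul differentiableAt_id).div
      ((differentiableAt_const _).sub differentiableAt_id) hz1).cexp).differentiableWithinAt
  have heq : (fun s : ℝ => F s) = fun s : ℝ => Complex.ofReal (g s) := by
    funext s
    rw [hF, hg]
    simp only [Complex.ofReal_exp]
    congr 1
    push_cast
    ring
  have h0mem : ((0 : ℝ) : ℂ) ∈ ({(1 : ℂ)}ᶜ : Set ℂ) := by simp
  have hkey : Complex.ofReal (iteratedDeriv m g 0) = iteratedDeriv m F 0 := by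
    rw [← iteratedDeriv_ofReal_comp m g 0, ← heq,
      iteratedDeriv_comp_ofReal' isOpen_compl_singleton m F hAn 0 h0mem]
    norm_num
  have hre : iteratedDeriv m g 0 ≤ ‖iteratedDeriv m F 0‖ := by
    calc iteratedDeriv m g 0 ≤ |iteratedDeriv m g 0| := le_abs_self _
      _ = ‖iteratedDeriv m F 0‖ := by
          rw [← hkey, Complex.norm_real, Real.norm_eq_abs]
  have hfacpos : (0 : ℝ) < (Nat.factorial m : ℝ) := by
    exact_mod_cast Nat.factorial_pos m
  have hdivle : iteratedDeriv m g 0 / (Nat.factorial m : ℝ) ≤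
      Real.exp (beta * R / (1 - R)) / R ^ m := by
    rw [div_le_iff₀ hfacpos]
    calc iteratedDeriv m g 0 ≤ (Nat.factorial m : ℝ) *
          (Real.exp (beta * R / (1 - R)) / R ^ m) := hre.trans hcb
      _ = Real.exp (beta * R / (1 - R)) / R ^ m * (Nat.factorial m : ℝ) := by ring
  refine hdivle.trans ?_
  have hfin := elementary_bound hbeta hm ht
  have hRt : beta * R / (1 - R) = beta * (1 - t) / t := by
    rw [hR]; ring_nf
  rw [hRt, hR]
  exact hfin
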